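/- arXiv:1501.02046 — 3 statements merged into one kernel-verified Lean document; each statement's English description precedes it below -/
import Mathlib

section
/- Let B be an n × n complex positive semidefinite matrix. The function g(Y) = log det(Y + B) − log det(Y), where det denotes the (real, positive) determinant of a Hermitian positive definite matrix, is convex on the convex set of n × n Hermitian positive definite matrices: for all Hermitian positive definite Y₁, Y₂ and all θ ∈ [0,1], g(θY₁ + (1−θ)Y₂) ≤ θ·g(Y₁) + (1−θ)·g(Y₂). -/
open Matrix ComplexOrder

namespace LogDetAux

variable {n : ℕ} {m : Type*} [Fintype m]

lemma rsmul (c : ℝ) (M : Matrix m m ℂ) : c • M = (c : ℂ) • M := by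
  ext i j
  simp [Matrix.smul_apply, Complex.real_smul]

lemma psd_rsmul {M : Matrix m m ℂ} (hM : M.PosSemidef) {c : ℝ}
    (hc : 0 ≤ c) : (c • M).PosSemidef := by
  rw [rsmul]
  refine .of_dotProduct_mulVec_nonneg ?_ fun x => ?_
  · unfold Matrix.IsHermitian
    rw [conjTranspose_smul, hM.1]
    simp [Complex.conj_ofReal]
  · rw [smul_mulVec, dotProduct_smul, smul_eq_mul]
    exact mul_nonneg (Complex.zero_le_real.mpr hc) (hM.dotProduct_mulVec_nonneg x)

lemma pd_rsmul {M : Matrix m m ℂ} (hM : M.PosDef) {c : ℝ}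
    (hc : 0 < c) : (c • M).PosDef := by
  rw [rsmul]
  refine .of_dotProduct_mulVec_pos ?_ fun x hx => ?_
  · unfold Matrix.IsHermitian
    rw [conjTranspose_smul, hM.1]
    simp [Complex.conj_ofReal]
  · rw [smul_mulVec, dotProduct_smul, smul_eq_mul]
    exact mul_pos (Complex.zero_lt_real.mpr hc) (hM.dotProduct_mulVec_pos hx)

lemma convex_posDef {Y₁ Y₂ : Matrix (Fin n) (Fin n) ℂ} (hY₁ : Y₁.PosDef) (hY₂ : Y₂.PosDef)
    {θ : ℝ} (hθ₀ : 0 ≤ θ) (hθ₁ : θ ≤ 1) : (θ • Y₁ + (1 - θ) • Y₂).PosDef := by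
  rcases eq_or_lt_of_le hθ₀ with h | h
  · rw [← h]
    simpa using hY₂
  · exact (pd_rsmul hY₁ h).add_posSemidef (psd_rsmul hY₂.posSemidef (by linarith))

lemma trace_mul_nonneg {P B : Matrix (Fin n) (Fin n) ℂ} (hP : P.PosSemidef) (hB : B.PosSemidef) :
    0 ≤ (Matrix.trace (P * B)).re := by
  classical
  obtain ⟨s, hsh, hss⟩ : ∃ s : Matrix (Fin n) (Fin n) ℂ, sᴴ = s ∧ s * s = P := by
    open scoped MatrixOrder in
    exact ⟨CFC.sqrt P, (CFC.sqrt_nonneg P).posSemidef.1, CFC.sqrt_mul_sqrt_self P hP.nonneg⟩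
  have h1 : Matrix.trace (P * B) = Matrix.trace (sᴴ * B * s) := by
    rw [hsh, ← hss]
    rw [mul_assoc, Matrix.trace_mul_comm, mul_assoc]
  have hpsd : (sᴴ * B * s).PosSemidef := hB.conjTranspose_mul_mul_same s
  have htr : 0 ≤ Matrix.trace (sᴴ * B * s) := by
    rw [Matrix.trace]
    apply Finset.sum_nonneg
    intro i _
    have h2 : star (Pi.single i (1:ℂ)) ⬝ᵥ ((sᴴ * B * s) *ᵥ Pi.single i 1) = (sᴴ * B * s) i i := by
      simp [dotProduct, Matrix.mulVec_single, Pi.single_apply, Pi.star_apply,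
        apply_ite (star : ℂ → ℂ), Finset.sum_ite_eq]
    have := hpsd.dotProduct_mulVec_nonneg (Pi.single i 1)
    rw [h2] at this
    simpa [Matrix.diag] using this
  rw [h1]
  exact (Complex.le_def.mp htr).1


lemma inv_convex {A₁ A₂ : Matrix (Fin n) (Fin n) ℂ} (h₁ : A₁.PosDef) (h₂ : A₂.PosDef)
    {θ : ℝ} (hθ₀ : 0 ≤ θ) (hθ₁ : θ ≤ 1) :
    (θ • A₁⁻¹ + (1 - θ) • A₂⁻¹ - (θ • A₁ + (1 - θ) • A₂)⁻¹).PosSemidef := by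
  classical
  have hA : (θ • A₁ + (1 - θ) • A₂).PosDef := convex_posDef h₁ h₂ hθ₀ hθ₁
  have hb : ∀ (A : Matrix (Fin n) (Fin n) ℂ), A.PosDef →
      (fromBlocks A 1 1 A⁻¹).PosSemidef := by
    intro A hA
    haveI := hA.isUnit.invertible
    have h0 : (fromBlocks A (1 : Matrix (Fin n) (Fin n) ℂ)
        (1 : Matrix (Fin n) (Fin n) ℂ)ᴴ A⁻¹).PosSemidef := by
      rw [Matrix.PosDef.fromBlocks₁₁ _ _ hA]
      simpa using (Matrix.PosSemidef.zero :
        (0 : Matrix (Fin n) (Fin n) ℂ).PosSemidef)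
    simpa using h0
  have hsum : (fromBlocks (θ • A₁ + (1 - θ) • A₂) 1 1
      (θ • A₁⁻¹ + (1 - θ) • A₂⁻¹)).PosSemidef := by
    have hpsd := ((psd_rsmul (hb A₁ h₁) hθ₀).add
      (psd_rsmul (hb A₂ h₂) (by linarith : (0:ℝ) ≤ 1 - θ)))
    have heq : θ • fromBlocks A₁ 1 1 A₁⁻¹ + (1 - θ) • fromBlocks A₂ 1 1 A₂⁻¹
        = fromBlocks (θ • A₁ + (1 - θ) • A₂) 1 1 (θ • A₁⁻¹ + (1 - θ) • A₂⁻¹) := by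
      have h1 : θ • (1 : Matrix (Fin n) (Fin n) ℂ) + (1 - θ) • 1 = 1 := by
        rw [← add_smul]; norm_num
      rw [Matrix.fromBlocks_smul, Matrix.fromBlocks_smul, Matrix.fromBlocks_add, h1]
    rw [heq] at hpsd
    exact hpsd
  haveI := hA.isUnit.invertible
  have := (Matrix.PosDef.fromBlocks₁₁ (1 : Matrix (Fin n) (Fin n) ℂ)
      (θ • A₁⁻¹ + (1 - θ) • A₂⁻¹) hA).mp (by simpa using hsum)
  simpa using this


lemma det_hasDerivAt (Y B : Matrix (Fin n) (Fin n) ℂ) (s₀ : ℝ)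
    (hd : IsUnit (Y + s₀ • B).det) :
    HasDerivAt (fun s : ℝ => (Y + s • B).det)
      ((Y + s₀ • B).det * Matrix.trace ((Y + s₀ • B)⁻¹ * B)) s₀ := by
  classical
  set A₀ := Y + s₀ • B with hA₀
  set M := A₀⁻¹ * B with hM
  have hAM : A₀ * M = B := by
    rw [hM, ← mul_assoc, Matrix.mul_nonsing_inv _ hd, one_mul]
  have key : ∀ s : ℝ, Y + s • B = A₀ * (1 + ((s - s₀ : ℝ) : ℂ) • M) := by
    intro s
    rw [mul_add, mul_one, Matrix.mul_smul, hAM, ← rsmul, hA₀]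
    rw [add_assoc, ← add_smul]
    ring_nf
  set q : Polynomial ℂ := Matrix.det (1 + (Polynomial.X : Polynomial ℂ) • M.map Polynomial.C)
    with hq
  have heval : ∀ t : ℂ, q.eval t = Matrix.det (1 + t • M) := by
    intro t
    rw [hq]
    show (Polynomial.evalRingHom t) (Matrix.det _) = _
    rw [RingHom.map_det]
    congr 1
    ext i j
    by_cases hij : i = j <;>
      simp [hij, RingHom.mapMatrix_apply, Matrix.map_apply, Matrix.one_apply,
        Matrix.smul_apply, smul_eq_mul, mul_comm t]
  have hqd : (Polynomial.derivative q).eval 0 = Matrix.trace M :=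
    Matrix.derivative_det_one_add_X_smul M
  have hr : HasDerivAt (fun s : ℝ => ((s : ℂ) - (s₀ : ℂ))) 1 s₀ := by
    simpa using (Complex.ofRealCLM.hasDerivAt (x := s₀)).sub_const (s₀ : ℂ)
  have hpoly : HasDerivAt (fun t : ℂ => q.eval t) (Matrix.trace M) 0 := by
    simpa [hqd] using q.hasDerivAt (0 : ℂ)
  have hcomp : HasDerivAt (fun s : ℝ => q.eval ((s : ℂ) - (s₀ : ℂ))) (Matrix.trace M) s₀ := by
    have h0 : ((s₀ : ℂ) - (s₀ : ℂ)) = 0 := by ring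
    have := HasDerivAt.scomp (x := s₀) (by rw [h0] at *; exact hpoly) hr
    rw [one_smul] at this
    exact this
  have hmul : HasDerivAt (fun s : ℝ => A₀.det * q.eval ((s : ℂ) - (s₀ : ℂ)))
      (A₀.det * Matrix.trace M) s₀ := hcomp.const_mul A₀.det
  have hfun : (fun s : ℝ => A₀.det * q.eval ((s : ℂ) - (s₀ : ℂ)))
      = fun s : ℝ => (Y + s • B).det := by
    funext s
    rw [heval, key s, Matrix.det_mul]
    push_cast
    ring_nf
  rw [hfun] at hmul
  exact hmul


lemma pd_aux {Y B : Matrix (Fin n) (Fin n) ℂ} (hY : Y.PosDef) (hB : B.PosSemidef) :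
    ∀ s : ℝ, s ∈ Set.uIcc (0:ℝ) 1 → (Y + s • B).PosDef := by
  intro s hs
  rw [Set.uIcc_of_le (by norm_num : (0:ℝ) ≤ 1)] at hs
  exact hY.add_posSemidef (psd_rsmul hB hs.1)

lemma integrable_aux {Y B : Matrix (Fin n) (Fin n) ℂ} (hY : Y.PosDef) (hB : B.PosSemidef) :
    IntervalIntegrable (fun s : ℝ => (Matrix.trace ((Y + s • B)⁻¹ * B)).re)
      MeasureTheory.volume 0 1 := by
  classical
  have hPD := pd_aux hY hB
  have hcont : ContinuousOn (fun s : ℝ => (Matrix.trace ((Y + s • B)⁻¹ * B)).re)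
      (Set.uIcc (0:ℝ) 1) := by
    have hc0 : Continuous fun s : ℝ => Y + s • B :=
      continuous_const.add (continuous_id.smul continuous_const)
    have hdet : Continuous fun s : ℝ => (Y + s • B).det := hc0.matrix_det
    have htr : Continuous fun s : ℝ => Matrix.trace ((Y + s • B).adjugate * B) :=
      (hc0.matrix_adjugate.matrix_mul continuous_const).matrix_trace
    have hg : ContinuousOn
        (fun s : ℝ => (Matrix.trace ((Y + s • B).adjugate * B) / (Y + s • B).det).re)
        (Set.uIcc (0:ℝ) 1) :=
      Complex.continuous_re.comp_continuousOn
        (htr.continuousOn.div hdet.continuousOn (fun s hs => (hPD s hs).det_pos.ne'))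
    refine hg.congr fun s hs => ?_
    congr 1
    rw [Matrix.inv_def, Ring.inverse_eq_inv, Matrix.smul_mul, Matrix.trace_smul,
      smul_eq_mul, inv_mul_eq_div]
  exact hcont.intervalIntegrable

lemma logdet_sub_eq_integral {Y B : Matrix (Fin n) (Fin n) ℂ}
    (hY : Y.PosDef) (hB : B.PosSemidef) :
    Real.log ((Y + B).det.re) - Real.log (Y.det.re)
      = ∫ s in (0:ℝ)..(1:ℝ), (Matrix.trace ((Y + s • B)⁻¹ * B)).re := by
  classical
  have hPD := pd_aux hY hB
  have hderiv : ∀ s ∈ Set.uIcc (0:ℝ) 1,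
      HasDerivAt (fun s : ℝ => Real.log ((Y + s • B).det.re))
        ((Matrix.trace ((Y + s • B)⁻¹ * B)).re) s := by
    intro s hs
    have hA := hPD s hs
    have hdp := hA.det_pos
    have hre : 0 < ((Y + s • B).det).re := (Complex.lt_def.mp hdp).1
    have him : ((Y + s • B).det).im = 0 := ((Complex.lt_def.mp hdp).2).symm
    have h1 := det_hasDerivAt Y B s (hdp.ne'.isUnit)
    have h2 : HasDerivAt (fun s : ℝ => ((Y + s • B).det).re)
        (((Y + s • B).det * Matrix.trace ((Y + s • B)⁻¹ * B)).re) s :=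
      Complex.reCLM.hasFDerivAt.comp_hasDerivAt s h1
    have h3 := h2.log hre.ne'
    convert h3 using 1
    rw [Complex.mul_re, him, zero_mul, sub_zero, mul_comm, mul_div_assoc,
      div_self hre.ne', mul_one]
  have hint := integrable_aux hY hB
  have hFTC := intervalIntegral.integral_eq_sub_of_hasDerivAt hderiv hint
  rw [hFTC]
  norm_num


theorem main
    (B : Matrix (Fin n) (Fin n) ℂ) (hB : B.PosSemidef)
    (Y₁ Y₂ : Matrix (Fin n) (Fin n) ℂ) (hY₁ : Y₁.PosDef) (hY₂ : Y₂.PosDef)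
    (θ : ℝ) (hθ₀ : 0 ≤ θ) (hθ₁ : θ ≤ 1) :
    Real.log ((θ • Y₁ + (1 - θ) • Y₂ + B).det.re)
        - Real.log ((θ • Y₁ + (1 - θ) • Y₂).det.re)
      ≤ θ * (Real.log ((Y₁ + B).det.re) - Real.log (Y₁.det.re))
        + (1 - θ) * (Real.log ((Y₂ + B).det.re) - Real.log (Y₂.det.re)) := by
  classical
  have hW : (θ • Y₁ + (1 - θ) • Y₂).PosDef := convex_posDef hY₁ hY₂ hθ₀ hθ₁
  rw [logdet_sub_eq_integral hW hB, logdet_sub_eq_integral hY₁ hB,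
    logdet_sub_eq_integral hY₂ hB]
  have hiW := integrable_aux hW hB
  have hi₁ := integrable_aux hY₁ hB
  have hi₂ := integrable_aux hY₂ hB
  have hcomb : IntervalIntegrable
      (fun s : ℝ => θ * (Matrix.trace ((Y₁ + s • B)⁻¹ * B)).re
        + (1 - θ) * (Matrix.trace ((Y₂ + s • B)⁻¹ * B)).re)
      MeasureTheory.volume 0 1 := (hi₁.const_mul θ).add (hi₂.const_mul (1 - θ))
  have hpt : ∀ s ∈ Set.Icc (0:ℝ) 1,
      (Matrix.trace ((θ • Y₁ + (1 - θ) • Y₂ + s • B)⁻¹ * B)).re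
        ≤ θ * (Matrix.trace ((Y₁ + s • B)⁻¹ * B)).re
          + (1 - θ) * (Matrix.trace ((Y₂ + s • B)⁻¹ * B)).re := by
    intro s hs
    have hA₁ : (Y₁ + s • B).PosDef := hY₁.add_posSemidef (psd_rsmul hB hs.1)
    have hA₂ : (Y₂ + s • B).PosDef := hY₂.add_posSemidef (psd_rsmul hB hs.1)
    have hkey : θ • Y₁ + (1 - θ) • Y₂ + s • B
        = θ • (Y₁ + s • B) + (1 - θ) • (Y₂ + s • B) := by
      module
    have hP := inv_convex hA₁ hA₂ hθ₀ hθ₁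
    have h0 := trace_mul_nonneg hP hB
    rw [Matrix.sub_mul, Matrix.add_mul, Matrix.smul_mul, Matrix.smul_mul,
      Matrix.trace_sub, Matrix.trace_add, Matrix.trace_smul, Matrix.trace_smul,
      Complex.sub_re, Complex.add_re] at h0
    rw [hkey]
    have hsre : ∀ (c : ℝ) (z : ℂ), (c • z).re = c * z.re := by
      intro c z
      rw [Complex.real_smul, Complex.mul_re]
      simp
    rw [hsre, hsre] at h0
    linarith
  have hmono := intervalIntegral.integral_mono_on (by norm_num : (0:ℝ) ≤ 1) hiW hcomb hpt
  calc (∫ s in (0:ℝ)..1, (Matrix.trace ((θ • Y₁ + (1 - θ) • Y₂ + s • B)⁻¹ * B)).re)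
      ≤ ∫ s in (0:ℝ)..1, (θ * (Matrix.trace ((Y₁ + s • B)⁻¹ * B)).re
          + (1 - θ) * (Matrix.trace ((Y₂ + s • B)⁻¹ * B)).re) := hmono
    _ = θ * (∫ s in (0:ℝ)..1, (Matrix.trace ((Y₁ + s • B)⁻¹ * B)).re)
          + (1 - θ) * ∫ s in (0:ℝ)..1, (Matrix.trace ((Y₂ + s • B)⁻¹ * B)).re := by
        rw [intervalIntegral.integral_add (hi₁.const_mul θ) (hi₂.const_mul (1 - θ)),
          intervalIntegral.integral_const_mul, intervalIntegral.integral_const_mul]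

end LogDetAux


/-- For Hermitian positive definite `Y`, `det Y` is a positive real; we take its real
part to define `log det`. The function `g(Y) = log det(Y + B) − log det Y`, with `B`
positive semidefinite, is convex on the set of Hermitian positive definite matrices. -/
theorem logdet_ratio_convex_on_posdef
    (n : ℕ) (B : Matrix (Fin n) (Fin n) ℂ) (hB : B.PosSemidef)
    (Y₁ Y₂ : Matrix (Fin n) (Fin n) ℂ) (hY₁ : Y₁.PosDef) (hY₂ : Y₂.PosDef)
    (θ : ℝ) (hθ₀ : 0 ≤ θ) (hθ₁ : θ ≤ 1) :
    Real.log ((θ • Y₁ + (1 - θ) • Y₂ + B).det.re)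
        - Real.log ((θ • Y₁ + (1 - θ) • Y₂).det.re)
      ≤ θ * (Real.log ((Y₁ + B).det.re) - Real.log (Y₁.det.re))
        + (1 - θ) * (Real.log ((Y₂ + B).det.re) - Real.log (Y₂.det.re)) := by
  exact LogDetAux.main B hB Y₁ Y₂ hY₁ hY₂ θ hθ₀ hθ₁
end

section
/- Fix σ² > 0, an N_I × M_E complex matrix F, an N_I × M_I complex matrix H, and an M_I × M_I complex positive semidefinite matrix S_I. Define R(S_E) = log₂ det(I + (F S_E Fᴴ + σ² I)^{-1} H S_I Hᴴ) for M_E × M_E positive semidefinite S_E. Then R is convex on the set of positive semidefinite matrices S_E: for all positive semidefinite S₁, S₂ and θ ∈ [0,1], R(θS₁ + (1−θ)S₂) ≤ θ·R(S₁) + (1−θ)·R(S₂). -/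
open Matrix ComplexOrder


variable {n : Type*} [Fintype n] [DecidableEq n]

open scoped MatrixOrder in
noncomputable def Matrix.PosSemidef.sqrt {M : Matrix n n ℂ} (_hM : M.PosSemidef) : Matrix n n ℂ :=
  CFC.sqrt M

open scoped MatrixOrder in
lemma Matrix.PosSemidef.sqrt_mul_self {M : Matrix n n ℂ} (hM : M.PosSemidef) :
    hM.sqrt * hM.sqrt = M :=
  CFC.sqrt_mul_sqrt_self M hM.nonneg

open scoped MatrixOrder in
lemma Matrix.PosSemidef.posSemidef_sqrt {M : Matrix n n ℂ} (hM : M.PosSemidef) :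
    hM.sqrt.PosSemidef :=
  (CFC.sqrt_nonneg M).posSemidef

lemma real_smul_eq_complex {m l : Type*} (r : ℝ) (M : Matrix m l ℂ) :
    r • M = (r : ℂ) • M := by
  ext i j
  simp [Matrix.smul_apply, Complex.real_smul]

lemma posSemidef_ofReal_smul {c : ℝ} (hc : 0 ≤ c) {M : Matrix n n ℂ}
    (hM : M.PosSemidef) : ((c : ℂ) • M).PosSemidef := by
  refine ⟨?_, fun x => ?_⟩
  · unfold Matrix.IsHermitian
    rw [conjTranspose_smul, hM.1.eq]
    congr 1
    simp [Complex.conj_ofReal]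
  · exact (hM.smul (by exact_mod_cast hc : (0:ℂ) ≤ (c:ℂ))).2 x

lemma posDef_ofReal_smul {c : ℝ} (hc : 0 < c) {M : Matrix n n ℂ}
    (hM : M.PosDef) : ((c : ℂ) • M).PosDef := by
  refine ⟨(posSemidef_ofReal_smul hc.le hM.posSemidef).1, fun x hx => ?_⟩
  exact (hM.smul (by exact_mod_cast hc : (0:ℂ) < (c:ℂ))).2 hx

lemma Matrix.PosDef.det_re_pos {M : Matrix n n ℂ} (hM : M.PosDef) : 0 < M.det.re :=
  (Complex.lt_def.mp hM.det_pos).1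

lemma Matrix.PosDef.det_eq_ofReal {M : Matrix n n ℂ} (hM : M.PosDef) :
    M.det = (M.det.re : ℂ) := by
  have h := (Complex.lt_def.mp hM.det_pos).2
  exact Complex.ext rfl (by simp [← h])

/-- determinant of `a•1 + b•Q` for Hermitian `Q` as a product over eigenvalues. -/
lemma det_smul_one_add_smul {Q : Matrix n n ℂ} (hQ : Q.IsHermitian) (a b : ℝ) :
    ((a : ℂ) • 1 + (b : ℂ) • Q).det
      = ((∏ i, (a + b * hQ.eigenvalues i) : ℝ) : ℂ) := by
  set U : Matrix n n ℂ := (hQ.eigenvectorUnitary : Matrix n n ℂ) with hU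
  have hUU : U * star U = 1 := (Matrix.mem_unitaryGroup_iff).mp hQ.eigenvectorUnitary.2
  have key : (a : ℂ) • 1 + (b : ℂ) • Q
      = U * ((a : ℂ) • 1 + (b : ℂ) • diagonal (RCLike.ofReal ∘ hQ.eigenvalues)) * star U := by
    conv_lhs => rw [hQ.spectral_theorem, Unitary.conjStarAlgAut_apply, ← hU]
    simp only [Matrix.mul_add, Matrix.add_mul, mul_smul_comm, smul_mul_assoc,
      Matrix.mul_assoc, mul_one, one_mul, hUU]
  rw [key, det_mul_right_comm, hUU, one_mul]
  have : (a : ℂ) • (1 : Matrix n n ℂ) + (b : ℂ) • diagonal (RCLike.ofReal ∘ hQ.eigenvalues)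
      = diagonal (fun i => ((a + b * hQ.eigenvalues i : ℝ) : ℂ)) := by
    rw [← diagonal_one, ← diagonal_smul, ← diagonal_smul, diagonal_add]
    refine congrArg diagonal (funext fun i => ?_)
    show (a:ℂ) * 1 + (b:ℂ) * ((hQ.eigenvalues i : ℝ) : ℂ) = ((a + b * hQ.eigenvalues i : ℝ) : ℂ)
    push_cast
    ring
  rw [this, det_diagonal]
  push_cast
  rfl

lemma sqrt_det_isUnit {M : Matrix n n ℂ} (hM : M.PosDef) :
    IsUnit (hM.posSemidef.sqrt).det := by
  have h : hM.posSemidef.sqrt.det * hM.posSemidef.sqrt.det = M.det := by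
    rw [← det_mul, hM.posSemidef.sqrt_mul_self]
  refine isUnit_iff_ne_zero.mpr fun h0 => hM.det_pos.ne' ?_
  rw [← h, h0, mul_zero]

lemma inv_convex {W₁ W₂ : Matrix n n ℂ} (h₁ : W₁.PosDef) (h₂ : W₂.PosDef)
    {θ τ : ℝ} (hθ : 0 < θ) (hτ : 0 < τ) (hsum : θ + τ = 1) :
    ((θ:ℂ) • W₁⁻¹ + (τ:ℂ) • W₂⁻¹ - ((θ:ℂ) • W₁ + (τ:ℂ) • W₂)⁻¹).PosSemidef := by
  have posDef_smul : ∀ {c : ℝ}, 0 < c → ∀ {M : Matrix n n ℂ}, M.PosDef → ((c:ℂ) • M).PosDef := by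
    intro c hc M hM
    refine ⟨(posSemidef_ofReal_smul hc.le hM.posSemidef).1, fun x hx => ?_⟩
    exact (hM.smul (by exact_mod_cast hc : (0:ℂ) < (c:ℂ))).2 hx
  set Wθ := (θ:ℂ) • W₁ + (τ:ℂ) • W₂ with hWθdef
  have hWθ : Wθ.PosDef := (posDef_smul hθ h₁).add (posDef_smul hτ h₂)
  set X := Wθ⁻¹ with hXdef
  have hX : X.IsHermitian := hWθ.inv.isHermitian
  have key : ∀ (W : Matrix n n ℂ), W.PosDef →
      (W⁻¹ + (X * W * X - (X + X))).PosSemidef := by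
    intro W hW
    have hdet : IsUnit W.det := isUnit_iff_ne_zero.mpr hW.det_pos.ne'
    have h1 : W * W⁻¹ = 1 := mul_nonsing_inv _ hdet
    have h2 : W⁻¹ * W = 1 := nonsing_inv_mul _ hdet
    have hWH : W⁻¹.IsHermitian := hW.inv.isHermitian
    set B := X - W⁻¹ with hBdef
    have hpsd := hW.posSemidef.conjTranspose_mul_mul_same B
    rw [(hX.sub hWH).eq] at hpsd
    have heq : B * W * B = W⁻¹ + (X * W * X - (X + X)) := by
      have e1 : B * W = X * W - 1 := by rw [hBdef, sub_mul, h2]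
      calc B * W * B = (X * W - 1) * (X - W⁻¹) := by rw [e1, hBdef]
        _ = X * W * X - X * (W * W⁻¹) - X + W⁻¹ := by
            simp only [sub_mul, mul_sub, one_mul, mul_one, Matrix.mul_assoc]
            abel
        _ = W⁻¹ + (X * W * X - (X + X)) := by
            rw [h1, mul_one]
            simp only [Matrix.mul_assoc]
            abel
    rwa [heq] at hpsd
  have k₁ := key W₁ h₁
  have k₂ := key W₂ h₂
  have psd := (posSemidef_ofReal_smul hθ.le k₁).add (posSemidef_ofReal_smul hτ.le k₂)
  have hcoe : (θ:ℂ) + (τ:ℂ) = 1 := by exact_mod_cast hsum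
  have hXWX : (θ:ℂ) • (X * W₁ * X) + (τ:ℂ) • (X * W₂ * X) = X := by
    have h2 : Wθ⁻¹ * Wθ = 1 := nonsing_inv_mul _ (isUnit_iff_ne_zero.mpr hWθ.det_pos.ne')
    calc (θ:ℂ) • (X * W₁ * X) + (τ:ℂ) • (X * W₂ * X) = X * Wθ * X := by
          rw [hWθdef]
          simp only [Matrix.mul_add, Matrix.add_mul, mul_smul_comm, smul_mul_assoc]
      _ = X := by rw [hXdef, h2, one_mul]
  have hXX : (θ:ℂ) • (X + X) + (τ:ℂ) • (X + X) = X + X := by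
    rw [← add_smul, hcoe, one_smul]
  have heq : (θ:ℂ) • (W₁⁻¹ + (X * W₁ * X - (X + X)))
      + (τ:ℂ) • (W₂⁻¹ + (X * W₂ * X - (X + X)))
      = (θ:ℂ) • W₁⁻¹ + (τ:ℂ) • W₂⁻¹ - X := by
    rw [smul_add, smul_add, smul_sub, smul_sub]
    calc (θ:ℂ) • W₁⁻¹ + ((θ:ℂ) • (X * W₁ * X) - (θ:ℂ) • (X + X))
        + ((τ:ℂ) • W₂⁻¹ + ((τ:ℂ) • (X * W₂ * X) - (τ:ℂ) • (X + X)))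
        = (θ:ℂ) • W₁⁻¹ + (τ:ℂ) • W₂⁻¹
          + (((θ:ℂ) • (X * W₁ * X) + (τ:ℂ) • (X * W₂ * X))
            - ((θ:ℂ) • (X + X) + (τ:ℂ) • (X + X))) := by abel
      _ = (θ:ℂ) • W₁⁻¹ + (τ:ℂ) • W₂⁻¹ - X := by rw [hXWX, hXX]; abel
  rw [← heq]
  exact psd

lemma det_re_mono {M N : Matrix n n ℂ} (hM : M.PosDef) (hNM : (N - M).PosSemidef) :
    M.det.re ≤ N.det.re := by
  set S := hM.posSemidef.sqrt with hSdef
  have hSS : S * S = M := hM.posSemidef.sqrt_mul_self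
  have hSH : Sᴴ = S := hM.posSemidef.posSemidef_sqrt.1
  have hdS : IsUnit S.det := sqrt_det_isUnit hM
  have hS1 : S * S⁻¹ = 1 := mul_nonsing_inv S hdS
  have hS1' : S⁻¹ * S = 1 := nonsing_inv_mul S hdS
  have hSiH : (S⁻¹)ᴴ = S⁻¹ := by rw [conjTranspose_nonsing_inv, hSH]
  set Q := S⁻¹ * (N - M) * S⁻¹ with hQdef
  have hQ : Q.PosSemidef := by
    have := hNM.conjTranspose_mul_mul_same S⁻¹
    rwa [hSiH] at this
  have hSQS : S * Q * S = N - M := by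
    have e : S * Q * S = (S * S⁻¹) * (N - M) * (S⁻¹ * S) := by
      simp only [hQdef, Matrix.mul_assoc]
    rw [e, hS1, hS1', one_mul, mul_one]
  have hN : N = S * (1 + Q) * S := by
    rw [Matrix.mul_add, Matrix.add_mul, mul_one, hSS, hSQS]
    abel
  have hdet1Q := det_smul_one_add_smul hQ.1 1 1
  simp only [Complex.ofReal_one, one_smul] at hdet1Q
  set r := ∏ i, (1 + 1 * hQ.1.eigenvalues i) with hrdef
  have hr : 1 ≤ r := by
    rw [hrdef]
    calc (1:ℝ) = ∏ _i : n, (1:ℝ) := by simp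
      _ ≤ ∏ i, (1 + 1 * hQ.1.eigenvalues i) := by
          refine Finset.prod_le_prod (fun i _ => zero_le_one) fun i _ => ?_
          have := hQ.eigenvalues_nonneg i
          nlinarith
  have hdetN : N.det = ((M.det.re * r : ℝ) : ℂ) := by
    rw [hN, det_mul, det_mul, hdet1Q, mul_right_comm, ← det_mul, hSS, hM.det_eq_ofReal]
    push_cast [Complex.ofReal_re]
    ring
  calc M.det.re ≤ M.det.re * r := le_mul_of_one_le_right hM.det_re_pos.le hr
    _ = N.det.re := by rw [hdetN, Complex.ofReal_re]

lemma det_re_kyfan {A B : Matrix n n ℂ} (hA : A.PosDef) (hB : B.PosDef)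
    {θ τ : ℝ} (hθ₀ : 0 ≤ θ) (hτ₀ : 0 ≤ τ) (hsum : θ + τ = 1) :
    A.det.re ^ θ * B.det.re ^ τ ≤ ((θ:ℂ) • A + (τ:ℂ) • B).det.re := by
  set S := hA.posSemidef.sqrt with hSdef
  have hSS : S * S = A := hA.posSemidef.sqrt_mul_self
  have hSH : Sᴴ = S := hA.posSemidef.posSemidef_sqrt.1
  have hdS : IsUnit S.det := sqrt_det_isUnit hA
  have hS1 : S * S⁻¹ = 1 := mul_nonsing_inv S hdS
  have hS1' : S⁻¹ * S = 1 := nonsing_inv_mul S hdS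
  have hSiH : (S⁻¹)ᴴ = S⁻¹ := by rw [conjTranspose_nonsing_inv, hSH]
  set D := S⁻¹ * B * S⁻¹ with hDdef
  have hD : D.PosSemidef := by
    have := hB.posSemidef.conjTranspose_mul_mul_same S⁻¹
    rwa [hSiH] at this
  have hSDS : S * D * S = B := by
    have e : S * D * S = (S * S⁻¹) * B * (S⁻¹ * S) := by
      simp only [hDdef, Matrix.mul_assoc]
    rw [e, hS1, hS1', one_mul, mul_one]
  have hAB : (θ:ℂ) • A + (τ:ℂ) • B = S * ((θ:ℂ) • 1 + (τ:ℂ) • D) * S := by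
    rw [Matrix.mul_add, Matrix.add_mul, mul_smul_comm, smul_mul_assoc, mul_smul_comm,
      smul_mul_assoc, mul_one, hSS, hSDS]
  set a := A.det.re with hadef
  set b := B.det.re with hbdef
  have ha : 0 < a := hA.det_re_pos
  have hb : 0 < b := hB.det_re_pos
  set lam := hD.1.eigenvalues with hlamdef
  have hlam : ∀ i, 0 ≤ lam i := fun i => hD.eigenvalues_nonneg i
  set p := ∏ i, lam i with hpdef
  have hp : 0 ≤ p := Finset.prod_nonneg fun i _ => hlam i
  -- `det D = p`
  have hdetD : D.det = ((p : ℝ) : ℂ) := by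
    have := det_smul_one_add_smul hD.1 0 1
    simp only [Complex.ofReal_zero, Complex.ofReal_one, zero_smul, one_smul, zero_add] at this
    simpa [hpdef, hlamdef] using this
  -- `b = a * p`
  have hbap : b = a * p := by
    have : B.det = ((a * p : ℝ) : ℂ) := by
      rw [← hSDS, det_mul, det_mul, hdetD, mul_right_comm, ← det_mul, hSS, hA.det_eq_ofReal,
        ← hadef]
      push_cast
      ring
    have hre := congrArg Complex.re this
    rwa [Complex.ofReal_re] at hre
  -- determinant of the combination
  have hdetComb : ((θ:ℂ) • A + (τ:ℂ) • B).det
      = ((a * ∏ i, (θ + τ * lam i) : ℝ) : ℂ) := by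
    rw [hAB, det_mul, det_mul, det_smul_one_add_smul hD.1 θ τ, mul_right_comm, ← det_mul, hSS,
      hA.det_eq_ofReal, ← hadef]
    push_cast
    ring
  have hre : ((θ:ℂ) • A + (τ:ℂ) • B).det.re = a * ∏ i, (θ + τ * lam i) := by
    rw [hdetComb, Complex.ofReal_re]
  rw [hre]
  -- AM-GM on each eigenvalue
  have hgm : ∀ i, lam i ^ τ ≤ θ + τ * lam i := by
    intro i
    have := Real.geom_mean_le_arith_mean2_weighted hθ₀ hτ₀ zero_le_one (hlam i) hsum
    simpa [Real.one_rpow] using this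
  have hprod : p ^ τ ≤ ∏ i, (θ + τ * lam i) := by
    rw [hpdef, ← Real.finset_prod_rpow _ _ (fun i _ => hlam i) τ]
    exact Finset.prod_le_prod (fun i _ => Real.rpow_nonneg (hlam i) τ) fun i _ => hgm i
  have key : a ^ θ * b ^ τ = a * p ^ τ := by
    rw [hbap, Real.mul_rpow ha.le hp, ← mul_assoc, ← Real.rpow_add ha, hsum, Real.rpow_one]
  calc a ^ θ * b ^ τ = a * p ^ τ := key
    _ ≤ a * ∏ i, (θ + τ * lam i) := mul_le_mul_of_nonneg_left hprod ha.le

lemma posDef_ofReal_smul' {c : ℝ} (hc : 0 < c) {M : Matrix n n ℂ}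
    (hM : M.PosDef) : ((c : ℂ) • M).PosDef := by
  refine ⟨(posSemidef_ofReal_smul hc.le hM.posSemidef).1, fun x hx => ?_⟩
  exact (hM.smul (by exact_mod_cast hc : (0:ℂ) < (c:ℂ))).2 hx

lemma woodbury {Y C : Matrix n n ℂ} (hY : IsUnit Y.det) (hW : IsUnit (Y + C * C).det) :
    (1 + C * Y⁻¹ * C) * (1 - C * (Y + C * C)⁻¹ * C) = 1 := by
  set W := Y + C * C with hWdef
  have h1 : W * W⁻¹ = 1 := mul_nonsing_inv _ hW
  have h2 : Y⁻¹ * Y = 1 := nonsing_inv_mul _ hY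
  have h3 : W⁻¹ + Y⁻¹ * (C * C) * W⁻¹ = Y⁻¹ := by
    calc W⁻¹ + Y⁻¹ * (C * C) * W⁻¹
        = (Y⁻¹ * Y) * W⁻¹ + Y⁻¹ * ((C * C) * W⁻¹) := by rw [h2, one_mul, Matrix.mul_assoc]
      _ = Y⁻¹ * (Y * W⁻¹ + (C * C) * W⁻¹) := by rw [Matrix.mul_assoc, Matrix.mul_add]
      _ = Y⁻¹ * (W * W⁻¹) := by rw [← Matrix.add_mul]
      _ = Y⁻¹ := by rw [h1, mul_one]
  have key : Y⁻¹ - Y⁻¹ * (C * C) * W⁻¹ = W⁻¹ := sub_eq_of_eq_add h3.symm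
  have e : C * Y⁻¹ * C * (C * W⁻¹ * C) = C * (Y⁻¹ * (C * C) * W⁻¹) * C := by
    simp only [Matrix.mul_assoc]
  have expand : (1 + C * Y⁻¹ * C) * (1 - C * W⁻¹ * C)
      = 1 - C * W⁻¹ * C + (C * Y⁻¹ * C - C * (Y⁻¹ * (C * C) * W⁻¹) * C) := by
    rw [add_mul, one_mul, mul_sub, mul_one, e]
  rw [expand]
  have e2 : C * Y⁻¹ * C - C * (Y⁻¹ * (C * C) * W⁻¹) * C = C * W⁻¹ * C := by
    calc C * Y⁻¹ * C - C * (Y⁻¹ * (C * C) * W⁻¹) * C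
        = C * (Y⁻¹ - Y⁻¹ * (C * C) * W⁻¹) * C := by rw [Matrix.mul_sub, Matrix.sub_mul]
      _ = C * W⁻¹ * C := by rw [key]
  rw [e2]
  abel

lemma key_rel {Y A : Matrix n n ℂ} (hY : Y.PosDef) (hA : A.PosSemidef) :
    (1 - hA.sqrt * (Y + A)⁻¹ * hA.sqrt).PosDef ∧
    (1 + Y⁻¹ * A).det.re = ((1 - hA.sqrt * (Y + A)⁻¹ * hA.sqrt).det.re)⁻¹ := by
  set C := hA.sqrt with hCdef
  have hCC : C * C = A := hA.sqrt_mul_self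
  have hCH : Cᴴ = C := hA.posSemidef_sqrt.1
  have hWpd : (Y + A).PosDef := hY.add_posSemidef hA
  have hYdet : IsUnit Y.det := isUnit_iff_ne_zero.mpr hY.det_pos.ne'
  have hWdet : IsUnit (Y + C * C).det := by
    rw [hCC]; exact isUnit_iff_ne_zero.mpr hWpd.det_pos.ne'
  have hwood := woodbury hYdet hWdet
  rw [hCC] at hwood
  set G := 1 - C * (Y + A)⁻¹ * C with hGdef
  set K := 1 + C * Y⁻¹ * C with hKdef
  have hKpd : K.PosDef := by
    have hpsd : (C * Y⁻¹ * C).PosSemidef := by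
      have := hY.inv.posSemidef.conjTranspose_mul_mul_same C
      rwa [hCH] at this
    exact Matrix.PosDef.one.add_posSemidef hpsd
  have hGK : K⁻¹ = G := inv_eq_right_inv hwood
  have hGpd : G.PosDef := hGK ▸ hKpd.inv
  refine ⟨hGpd, ?_⟩
  have hdetKG : K.det * G.det = 1 := by rw [← det_mul, hwood, det_one]
  have e : 1 + Y⁻¹ * A = 1 + (Y⁻¹ * C) * C := by rw [← hCC, Matrix.mul_assoc]
  have hdet1 : (1 + Y⁻¹ * A).det = K.det := by
    rw [e, det_one_add_mul_comm, hKdef, Matrix.mul_assoc]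
  have hre : K.det.re * G.det.re = 1 := by
    rw [hKpd.det_eq_ofReal, hGpd.det_eq_ofReal] at hdetKG
    exact_mod_cast hdetKG
  have : K.det.re = (G.det.re)⁻¹ :=
    eq_inv_of_mul_eq_one_left hre
  rw [hdet1, this]

lemma core {Y₁ Y₂ A : Matrix n n ℂ} (hY₁ : Y₁.PosDef) (hY₂ : Y₂.PosDef) (hA : A.PosSemidef)
    {θ : ℝ} (hθ₀ : 0 ≤ θ) (hθ₁ : θ ≤ 1) :
    Real.logb 2 ((1 + ((θ:ℂ) • Y₁ + ((1 - θ : ℝ) : ℂ) • Y₂)⁻¹ * A).det.re)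
      ≤ θ * Real.logb 2 ((1 + Y₁⁻¹ * A).det.re)
        + (1 - θ) * Real.logb 2 ((1 + Y₂⁻¹ * A).det.re) := by
  rcases eq_or_lt_of_le hθ₀ with h0 | h0
  · rw [← h0]
    norm_num
  rcases eq_or_lt_of_le hθ₁ with h1 | h1
  · rw [h1]
    norm_num
  have hτ : 0 < 1 - θ := by linarith
  have hsum : θ + (1 - θ) = 1 := by ring
  have hcoe : (θ:ℂ) + ((1 - θ : ℝ):ℂ) = 1 := by push_cast; ring
  have hCH : (hA.sqrt)ᴴ = hA.sqrt := hA.posSemidef_sqrt.1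
  have hW₁ : (Y₁ + A).PosDef := hY₁.add_posSemidef hA
  have hW₂ : (Y₂ + A).PosDef := hY₂.add_posSemidef hA
  have hYθ : ((θ:ℂ) • Y₁ + ((1 - θ : ℝ):ℂ) • Y₂).PosDef :=
    (posDef_ofReal_smul' h0 hY₁).add (posDef_ofReal_smul' hτ hY₂)
  have hWθeq : (θ:ℂ) • Y₁ + ((1 - θ : ℝ):ℂ) • Y₂ + A
      = (θ:ℂ) • (Y₁ + A) + ((1 - θ : ℝ):ℂ) • (Y₂ + A) := by
    rw [smul_add, smul_add]
    calc (θ:ℂ) • Y₁ + ((1 - θ : ℝ):ℂ) • Y₂ + A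
        = (θ:ℂ) • Y₁ + ((1 - θ : ℝ):ℂ) • Y₂ + ((θ:ℂ) + ((1 - θ : ℝ):ℂ)) • A := by
          rw [hcoe, one_smul]
      _ = (θ:ℂ) • Y₁ + (θ:ℂ) • A + (((1 - θ : ℝ):ℂ) • Y₂ + ((1 - θ : ℝ):ℂ) • A) := by
          rw [add_smul]; abel
  obtain ⟨hG₁, hr₁⟩ := key_rel hY₁ hA
  obtain ⟨hG₂, hr₂⟩ := key_rel hY₂ hA
  obtain ⟨hGθ, hrθ⟩ := key_rel hYθ hA
  set C := hA.sqrt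
  -- the convex-combination matrix is positive definite
  have hMpd : ((θ:ℂ) • (1 - C * (Y₁ + A)⁻¹ * C)
      + ((1 - θ : ℝ):ℂ) • (1 - C * (Y₂ + A)⁻¹ * C)).PosDef :=
    (posDef_ofReal_smul' h0 hG₁).add (posDef_ofReal_smul' hτ hG₂)
  -- operator convexity of the inverse, conjugated by C
  have hic := inv_convex hW₁ hW₂ h0 hτ hsum
  have hconj := hic.conjTranspose_mul_mul_same C
  rw [hCH] at hconj
  have h1m : (θ:ℂ) • (1 : Matrix n n ℂ) + ((1 - θ : ℝ):ℂ) • 1 = 1 := by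
    rw [← add_smul, hcoe, one_smul]
  have heq : C * ((θ:ℂ) • (Y₁ + A)⁻¹ + ((1 - θ : ℝ):ℂ) • (Y₂ + A)⁻¹
        - ((θ:ℂ) • (Y₁ + A) + ((1 - θ : ℝ):ℂ) • (Y₂ + A))⁻¹) * C
      = (1 - C * (((θ:ℂ) • (Y₁ + A) + ((1 - θ : ℝ):ℂ) • (Y₂ + A)))⁻¹ * C)
        - ((θ:ℂ) • (1 - C * (Y₁ + A)⁻¹ * C)
          + ((1 - θ : ℝ):ℂ) • (1 - C * (Y₂ + A)⁻¹ * C)) := by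
    simp only [Matrix.mul_add, Matrix.add_mul, Matrix.mul_sub, Matrix.sub_mul,
      mul_smul_comm, smul_mul_assoc, smul_sub]
    nth_rewrite 1 [← h1m]
    module
  rw [heq] at hconj
  rw [← hWθeq] at hconj
  -- determinant chain
  have hky := det_re_kyfan hG₁ hG₂ h0.le hτ.le hsum
  have hmono := det_re_mono hMpd hconj
  have hchain : (1 - C * (Y₁ + A)⁻¹ * C).det.re ^ θ
        * (1 - C * (Y₂ + A)⁻¹ * C).det.re ^ (1 - θ)
      ≤ (1 - C * ((θ:ℂ) • Y₁ + ((1 - θ : ℝ):ℂ) • Y₂ + A)⁻¹ * C).det.re :=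
    le_trans hky hmono
  have hg₁ : 0 < (1 - C * (Y₁ + A)⁻¹ * C).det.re := hG₁.det_re_pos
  have hg₂ : 0 < (1 - C * (Y₂ + A)⁻¹ * C).det.re := hG₂.det_re_pos
  have hgθ : 0 < (1 - C * ((θ:ℂ) • Y₁ + ((1 - θ : ℝ):ℂ) • Y₂ + A)⁻¹ * C).det.re :=
    hGθ.det_re_pos
  rw [hrθ, hr₁, hr₂, Real.logb_inv, Real.logb_inv, Real.logb_inv]
  have h₁p : 0 < (1 - C * (Y₁ + A)⁻¹ * C).det.re ^ θ := Real.rpow_pos_of_pos hg₁ θ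
  have h₂p : 0 < (1 - C * (Y₂ + A)⁻¹ * C).det.re ^ (1 - θ) := Real.rpow_pos_of_pos hg₂ (1 - θ)
  have hfin : θ * Real.logb 2 (1 - C * (Y₁ + A)⁻¹ * C).det.re
      + (1 - θ) * Real.logb 2 (1 - C * (Y₂ + A)⁻¹ * C).det.re
      ≤ Real.logb 2 (1 - C * ((θ:ℂ) • Y₁ + ((1 - θ : ℝ):ℂ) • Y₂ + A)⁻¹ * C).det.re := by
    calc θ * Real.logb 2 (1 - C * (Y₁ + A)⁻¹ * C).det.re
        + (1 - θ) * Real.logb 2 (1 - C * (Y₂ + A)⁻¹ * C).det.re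
        = Real.logb 2 ((1 - C * (Y₁ + A)⁻¹ * C).det.re ^ θ)
          + Real.logb 2 ((1 - C * (Y₂ + A)⁻¹ * C).det.re ^ (1 - θ)) := by
          rw [Real.logb_rpow_eq_mul_logb_of_pos hg₁, Real.logb_rpow_eq_mul_logb_of_pos hg₂]
      _ = Real.logb 2 ((1 - C * (Y₁ + A)⁻¹ * C).det.re ^ θ
          * (1 - C * (Y₂ + A)⁻¹ * C).det.re ^ (1 - θ)) :=
          (Real.logb_mul h₁p.ne' h₂p.ne').symm
      _ ≤ _ := Real.logb_le_logb_of_le one_lt_two (mul_pos h₁p h₂p) hchain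
  linarith


/-- The achievable rate
`R(S_E) = log₂ det(I + (F S_E Fᴴ + σ² I)⁻¹ H S_I Hᴴ)`
(with `σ² > 0`, fixed channels `F`, `H` and fixed positive semidefinite information
covariance `S_I`) is convex in the positive semidefinite energy covariance `S_E`. -/
theorem rate_convex_in_energy_covariance
    (NI MEdim MI : ℕ) (σsq : ℝ) (hσ : 0 < σsq)
    (F : Matrix (Fin NI) (Fin MEdim) ℂ) (H : Matrix (Fin NI) (Fin MI) ℂ)
    (SI : Matrix (Fin MI) (Fin MI) ℂ) (hSI : SI.PosSemidef)
    (S₁ S₂ : Matrix (Fin MEdim) (Fin MEdim) ℂ)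
    (hS₁ : S₁.PosSemidef) (hS₂ : S₂.PosSemidef)
    (θ : ℝ) (hθ₀ : 0 ≤ θ) (hθ₁ : θ ≤ 1) :
    Real.logb 2
        ((1 + (F * (θ • S₁ + (1 - θ) • S₂) * Fᴴ + (σsq : ℂ) • 1)⁻¹ * (H * SI * Hᴴ)).det.re)
      ≤ θ * Real.logb 2 ((1 + (F * S₁ * Fᴴ + (σsq : ℂ) • 1)⁻¹ * (H * SI * Hᴴ)).det.re)
        + (1 - θ) * Real.logb 2 ((1 + (F * S₂ * Fᴴ + (σsq : ℂ) • 1)⁻¹ * (H * SI * Hᴴ)).det.re) := by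
  have hA : (H * SI * Hᴴ).PosSemidef := hSI.mul_mul_conjTranspose_same H
  have hσ1 : ((σsq : ℂ) • (1 : Matrix (Fin NI) (Fin NI) ℂ)).PosDef :=
    posDef_ofReal_smul' hσ Matrix.PosDef.one
  have hY₁ : (F * S₁ * Fᴴ + (σsq : ℂ) • 1).PosDef :=
    Matrix.PosDef.posSemidef_add (hS₁.mul_mul_conjTranspose_same F) hσ1
  have hY₂ : (F * S₂ * Fᴴ + (σsq : ℂ) • 1).PosDef :=
    Matrix.PosDef.posSemidef_add (hS₂.mul_mul_conjTranspose_same F) hσ1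
  have hcoe : (θ:ℂ) + ((1 - θ : ℝ):ℂ) = 1 := by push_cast; ring
  have hmix : F * (θ • S₁ + (1 - θ) • S₂) * Fᴴ + (σsq : ℂ) • 1
      = (θ:ℂ) • (F * S₁ * Fᴴ + (σsq : ℂ) • 1)
        + ((1 - θ : ℝ):ℂ) • (F * S₂ * Fᴴ + (σsq : ℂ) • 1) := by
    rw [real_smul_eq_complex, real_smul_eq_complex]
    have hs : (θ:ℂ) • ((σsq : ℂ) • (1 : Matrix (Fin NI) (Fin NI) ℂ))
        + ((1 - θ : ℝ):ℂ) • ((σsq : ℂ) • (1 : Matrix (Fin NI) (Fin NI) ℂ))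
        = (σsq : ℂ) • 1 := by
      rw [← add_smul, hcoe, one_smul]
    conv_lhs => rw [← hs]
    simp only [Matrix.mul_add, Matrix.add_mul, mul_smul_comm, smul_mul_assoc,
      Matrix.smul_mul, Matrix.mul_smul]
    module
  rw [hmix]
  exact core hY₁ hY₂ hA hθ₀ hθ₁
end

section
/- Fix σ² > 0, matrices F (N_I × M_E), H (N_I × M_I), and a positive semidefinite M_I × M_I matrix S_I, and define R(S_E, S_I) = log₂ det(I + (F S_E Fᴴ + σ² I)^{-1} H S_I Hᴴ). Let S_{E,1}, …, S_{E,d} be M_E × M_E positive semidefinite matrices and θ_1, …, θ_d ≥ 0 with Σ θ_i = 1. Then Σ_{i=1}^{d} θ_i · R(S_{E,i}, S_I) ≥ R(Σ_{i=1}^{d} θ_i S_{E,i}, S_I). -/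
open Matrix BigOperators ComplexOrder
open scoped MatrixOrder

/-- The achievable rate `R(S_E, S_I) = log₂ det(I + (F S_E Fᴴ + σ² I)⁻¹ H S_I Hᴴ)` of the
MIMO WIT link (in bps/Hz). -/
noncomputable def rateR {NI MEdim MI : ℕ} (σsq : ℝ)
    (F : Matrix (Fin NI) (Fin MEdim) ℂ) (H : Matrix (Fin NI) (Fin MI) ℂ)
    (SE : Matrix (Fin MEdim) (Fin MEdim) ℂ) (SI : Matrix (Fin MI) (Fin MI) ℂ) : ℝ :=
  Real.logb 2 ((1 + (F * SE * Fᴴ + (σsq : ℂ) • 1)⁻¹ * (H * SI * Hᴴ)).det.re)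

namespace TSJ

variable {n : ℕ}

lemma inv_mulVec_cancel {A : Matrix (Fin n) (Fin n) ℂ} (hA : A.PosDef) (x : Fin n → ℂ) :
    A *ᵥ (A⁻¹ *ᵥ x) = x := by
  rw [mulVec_mulVec, Matrix.mul_nonsing_inv _ (isUnit_iff_isUnit_det _ |>.mp hA.isUnit),
    one_mulVec]

lemma inv_mulVec_cancel' {A : Matrix (Fin n) (Fin n) ℂ} (hA : A.PosDef) (x : Fin n → ℂ) :
    A⁻¹ *ᵥ (A *ᵥ x) = x := by
  rw [mulVec_mulVec, Matrix.nonsing_inv_mul _ (isUnit_iff_isUnit_det _ |>.mp hA.isUnit),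
    one_mulVec]

lemma star_inv_dot {A : Matrix (Fin n) (Fin n) ℂ} (hA : A.PosDef) (x w : Fin n → ℂ) :
    star (A⁻¹ *ᵥ x) ⬝ᵥ w = star x ⬝ᵥ (A⁻¹ *ᵥ w) := by
  rw [star_mulVec, hA.isHermitian.inv.eq, ← dotProduct_mulVec]

/-- completing the square: quadratic lower bound for the inverse quadratic form -/
lemma quad_inv_ge {A : Matrix (Fin n) (Fin n) ℂ} (hA : A.PosDef) (x y : Fin n → ℂ) :
    star x ⬝ᵥ y + star y ⬝ᵥ x - star y ⬝ᵥ (A *ᵥ y) ≤ star x ⬝ᵥ (A⁻¹ *ᵥ x) := by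
  have h0 : (0:ℂ) ≤ star (y - A⁻¹ *ᵥ x) ⬝ᵥ (A *ᵥ (y - A⁻¹ *ᵥ x)) := hA.posSemidef.dotProduct_mulVec_nonneg _
  have hexp : star (y - A⁻¹ *ᵥ x) ⬝ᵥ (A *ᵥ (y - A⁻¹ *ᵥ x))
      = star x ⬝ᵥ (A⁻¹ *ᵥ x) - (star x ⬝ᵥ y + star y ⬝ᵥ x - star y ⬝ᵥ (A *ᵥ y)) := by
    have h1 : star (y - A⁻¹ *ᵥ x) = star y - star (A⁻¹ *ᵥ x) := by
      ext i; simp [Pi.sub_apply]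
    rw [mulVec_sub, h1, sub_dotProduct, dotProduct_sub, dotProduct_sub,
      inv_mulVec_cancel hA, star_inv_dot hA, star_inv_dot hA,
      inv_mulVec_cancel' hA]
    ring
  rw [hexp] at h0
  exact sub_nonneg.mp h0
end TSJ

namespace TSJ
open Finset
variable {n : ℕ}

lemma inv_convex_quad {d : ℕ} (A : Fin d → Matrix (Fin n) (Fin n) ℂ)
    (hA : ∀ i, (A i).PosDef) (c : Fin d → ℂ) (hc : ∀ i, 0 ≤ c i)
    (hcsum : ∑ i, c i = 1) (hB : (∑ i, c i • A i).PosDef) (x : Fin n → ℂ) :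
    star x ⬝ᵥ ((∑ i, c i • A i)⁻¹ *ᵥ x) ≤ ∑ i, c i * (star x ⬝ᵥ ((A i)⁻¹ *ᵥ x)) := by
  set B := ∑ i, c i • A i with hBdef
  set y := B⁻¹ *ᵥ x with hy
  have hBy : B *ᵥ y = x := inv_mulVec_cancel hB x
  have key : star x ⬝ᵥ (B⁻¹ *ᵥ x)
      = ∑ i, c i * (star x ⬝ᵥ y + star y ⬝ᵥ x - star y ⬝ᵥ ((A i) *ᵥ y)) := by
    have hs : B *ᵥ y = ∑ i, c i • ((A i) *ᵥ y) := by
      rw [hBdef]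
      rw [show (∑ i, c i • A i) *ᵥ y = ∑ i, (c i • A i) *ᵥ y from
        map_sum (Matrix.mulVec.addMonoidHomLeft y) _ _]
      simp [Matrix.smul_mulVec]
    have h1 : star y ⬝ᵥ (B *ᵥ y) = ∑ i, c i * (star y ⬝ᵥ ((A i) *ᵥ y)) := by
      rw [hs]
      simp [dotProduct, Finset.mul_sum, Pi.smul_apply, smul_eq_mul]
      rw [Finset.sum_comm]
      congr 1; ext i; congr 1; ext j; ring
    calc star x ⬝ᵥ (B⁻¹ *ᵥ x) = star x ⬝ᵥ y + star y ⬝ᵥ x - star y ⬝ᵥ (B *ᵥ y) := by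
          rw [hBy, ← hy]; ring
      _ = ∑ i, c i * (star x ⬝ᵥ y + star y ⬝ᵥ x - star y ⬝ᵥ ((A i) *ᵥ y)) := by
          rw [h1]
          simp only [mul_sub, mul_add, Finset.sum_sub_distrib, Finset.sum_add_distrib,
            ← Finset.sum_mul, hcsum, one_mul]
  rw [key]
  refine Finset.sum_le_sum fun i _ => ?_
  exact mul_le_mul_of_nonneg_left (quad_inv_ge (hA i) x y) (hc i)

end TSJ

namespace TSJ
variable {n : ℕ}

lemma diag_nonneg {M : Matrix (Fin n) (Fin n) ℂ} (hM : M.PosSemidef) (i : Fin n) :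
    0 ≤ M i i := by
  have := hM.dotProduct_mulVec_nonneg (Pi.single i 1)
  simpa [Matrix.mulVec_single, dotProduct, Pi.single_apply, Finset.sum_ite_eq',
    apply_ite] using this

lemma trace_psd_nonneg {M : Matrix (Fin n) (Fin n) ℂ} (hM : M.PosSemidef) :
    0 ≤ M.trace := by
  rw [Matrix.trace]
  exact Finset.sum_nonneg fun i _ => diag_nonneg hM i

lemma trace_mul_psd_nonneg {P Q : Matrix (Fin n) (Fin n) ℂ}
    (hP : P.PosSemidef) (hQ : Q.PosSemidef) : 0 ≤ (P * Q).trace := by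
  have hS : (CFC.sqrt Q).PosSemidef := (CFC.sqrt_nonneg Q).posSemidef
  have h1 : P * Q = P * CFC.sqrt Q * CFC.sqrt Q := by
    rw [Matrix.mul_assoc, CFC.sqrt_mul_sqrt_self Q hQ.nonneg]
  rw [h1, Matrix.trace_mul_cycle]
  have h2 : CFC.sqrt Q * P * CFC.sqrt Q = (CFC.sqrt Q)ᴴ * P * CFC.sqrt Q := by
    rw [hS.isHermitian.eq]
  rw [h2]
  exact trace_psd_nonneg (hP.conjTranspose_mul_mul_same _)

end TSJ

namespace TSJ
variable {n : ℕ}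

lemma dot_sum {ι : Type*} (s : Finset ι) (u : Fin n → ℂ) (v : ι → Fin n → ℂ) :
    u ⬝ᵥ (∑ i ∈ s, v i) = ∑ i ∈ s, u ⬝ᵥ v i := by
  simp only [dotProduct, Finset.sum_apply, Finset.mul_sum]
  exact Finset.sum_comm

lemma psd_inv_convex {d : ℕ} (A : Fin d → Matrix (Fin n) (Fin n) ℂ)
    (hA : ∀ i, (A i).PosDef) (c : Fin d → ℂ) (hc : ∀ i, 0 ≤ c i)
    (hcsum : ∑ i, c i = 1) (hB : (∑ i, c i • A i).PosDef) :
    (∑ i, c i • (A i)⁻¹ - (∑ i, c i • A i)⁻¹).PosSemidef := by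
  have hstar : ∀ i, star (c i) = c i := fun i => (IsSelfAdjoint.of_nonneg (hc i))
  refine Matrix.PosSemidef.of_dotProduct_mulVec_nonneg ?_ ?_
  · show _ᴴ = _
    rw [Matrix.conjTranspose_sub, Matrix.conjTranspose_sum]
    simp only [Matrix.conjTranspose_smul, hstar]
    rw [hB.isHermitian.inv.eq]
    congr 1
    exact Finset.sum_congr rfl fun i _ => by rw [(hA i).isHermitian.inv.eq]
  · intro x
    have hmv : (∑ i, c i • (A i)⁻¹ - (∑ i, c i • A i)⁻¹) *ᵥ x
        = (∑ i, c i • ((A i)⁻¹ *ᵥ x)) - (∑ i, c i • A i)⁻¹ *ᵥ x := by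
      rw [Matrix.sub_mulVec]
      congr 1
      rw [show (∑ i, c i • (A i)⁻¹) *ᵥ x = ∑ i, (c i • (A i)⁻¹) *ᵥ x from
        map_sum (Matrix.mulVec.addMonoidHomLeft x) _ _]
      simp [Matrix.smul_mulVec]
    rw [hmv, dotProduct_sub, dot_sum]
    simp only [dotProduct_smul, smul_eq_mul]
    exact sub_nonneg.mpr (inv_convex_quad A hA c hc hcsum hB x)

lemma trace_inv_convex {d : ℕ} (A : Fin d → Matrix (Fin n) (Fin n) ℂ)
    (hA : ∀ i, (A i).PosDef) (c : Fin d → ℂ) (hc : ∀ i, 0 ≤ c i)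
    (hcsum : ∑ i, c i = 1) (hB : (∑ i, c i • A i).PosDef)
    {Q : Matrix (Fin n) (Fin n) ℂ} (hQ : Q.PosSemidef) :
    ((∑ i, c i • A i)⁻¹ * Q).trace ≤ ∑ i, c i * ((A i)⁻¹ * Q).trace := by
  have h := trace_mul_psd_nonneg (psd_inv_convex A hA c hc hcsum hB) hQ
  rw [Matrix.sub_mul, Matrix.trace_sub, Finset.sum_mul] at h
  have : (∑ i, c i • (A i)⁻¹ * Q).trace = ∑ i, c i * ((A i)⁻¹ * Q).trace := by
    rw [Matrix.trace_sum]
    simp [Matrix.smul_mul, Matrix.trace_smul]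
  rw [this] at h
  exact sub_nonneg.mp h

end TSJ

namespace TSJ
open Polynomial
variable {n : ℕ}

lemma hasDerivAt_det_line (M Q : Matrix (Fin n) (Fin n) ℂ) (t₀ : ℝ)
    (h : IsUnit (M + (t₀:ℂ) • Q).det) :
    HasDerivAt (fun t : ℝ => (M + (t:ℂ) • Q).det)
      ((M + (t₀:ℂ) • Q).det * (((M + (t₀:ℂ) • Q)⁻¹ * Q).trace)) t₀ := by
  set M₀ := M + (t₀:ℂ) • Q with hM₀
  set B := M₀⁻¹ * Q with hB
  set p := (Matrix.det (1 + (Polynomial.X : ℂ[X]) • B.map Polynomial.C)).divX.divX with hp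
  have hfun : ∀ t : ℝ, (M + (t:ℂ) • Q).det
      = M₀.det * (1 + B.trace * ((t:ℂ) - t₀) + p.eval ((t:ℂ) - t₀) * ((t:ℂ) - t₀)^2) := by
    intro t
    have hM : M + (t:ℂ) • Q = M₀ * (1 + ((t:ℂ) - t₀) • B) := by
      rw [Matrix.mul_add, Matrix.mul_one, Matrix.mul_smul, hB, ← Matrix.mul_assoc,
        Matrix.mul_nonsing_inv _ h, Matrix.one_mul, hM₀, add_assoc, ← add_smul]
      ring_nf
    rw [hM, Matrix.det_mul, Matrix.det_one_add_smul]
  have hG : HasDerivAt (fun z : ℂ => M₀.det *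
      (1 + B.trace * (z - t₀) + p.eval (z - t₀) * (z - t₀)^2)) (M₀.det * B.trace) (t₀ : ℂ) := by
    have hid : HasDerivAt (fun z : ℂ => z - (t₀:ℂ)) 1 (t₀:ℂ) :=
      (hasDerivAt_id _).sub_const _
    have hpe : HasDerivAt (fun z : ℂ => p.eval (z - t₀)) (p.derivative.eval 0 * 1) (t₀:ℂ) := by
      have := HasDerivAt.comp (h := fun z : ℂ => z - (t₀:ℂ)) (h₂ := fun z => p.eval z)
        (t₀:ℂ) (p.hasDerivAt ((t₀:ℂ) - t₀)) hid
      rw [sub_self] at this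
      exact this
    have hpow : HasDerivAt (fun z : ℂ => (z - (t₀:ℂ))^2) (2 * ((t₀:ℂ) - t₀) ^ 1 * 1) (t₀:ℂ) :=
      hid.pow 2
    have hmul := hpe.mul hpow
    have hlin : HasDerivAt (fun z : ℂ => B.trace * (z - t₀)) (B.trace * 1) (t₀:ℂ) :=
      hid.const_mul _
    have hsum := ((hasDerivAt_const (t₀:ℂ) (1:ℂ)).add hlin).add hmul
    have := hsum.const_mul M₀.det
    refine HasDerivAt.congr_deriv this ?_
    simp
  have := hG.comp_ofReal
  have heq : (fun t : ℝ => (M + (t:ℂ) • Q).det)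
      = fun t : ℝ => M₀.det * (1 + B.trace * ((t:ℂ) - t₀) + p.eval ((t:ℂ) - t₀) * ((t:ℂ) - t₀)^2) :=
    funext hfun
  rw [heq]
  exact this

end TSJ

namespace TSJ
variable {n : ℕ}

lemma det_re_pos {M : Matrix (Fin n) (Fin n) ℂ} (hM : M.PosDef) : 0 < M.det.re :=
  (Complex.lt_def.mp hM.det_pos).1

lemma det_im_zero {M : Matrix (Fin n) (Fin n) ℂ} (hM : M.PosDef) : M.det.im = 0 :=
  ((Complex.lt_def.mp hM.det_pos).2).symm

lemma hasDerivAt_log_det (M Q : Matrix (Fin n) (Fin n) ℂ) (t₀ : ℝ)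
    (hPD : (M + (t₀:ℂ) • Q).PosDef) :
    HasDerivAt (fun t : ℝ => Real.log ((M + (t:ℂ) • Q).det.re))
      ((((M + (t₀:ℂ) • Q)⁻¹ * Q).trace).re) t₀ := by
  set M₀ := M + (t₀:ℂ) • Q with hM₀
  have hdet := hasDerivAt_det_line M Q t₀ (isUnit_iff_isUnit_det _ |>.mp hPD.isUnit)
  have hre : HasDerivAt (fun t : ℝ => (M + (t:ℂ) • Q).det.re)
      ((M₀.det * ((M₀⁻¹ * Q).trace)).re) t₀ :=
    Complex.reCLM.hasFDerivAt.comp_hasDerivAt t₀ hdet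
  have hne : (M + (t₀:ℂ) • Q).det.re ≠ 0 := (det_re_pos hPD).ne'
  have hlog := hre.log hne
  convert hlog using 1
  rw [Complex.mul_re, det_im_zero hPD, zero_mul, sub_zero, ← hM₀]
  field_simp
  rw [mul_div_assoc, div_self (det_re_pos hPD).ne', mul_one]

end TSJ

namespace TSJ
variable {n : ℕ}

lemma coe_nonneg {t : ℝ} (ht : 0 ≤ t) : (0:ℂ) ≤ (t:ℂ) := by
  rw [Complex.le_def]; simp [ht]

lemma coe_pos {t : ℝ} (ht : 0 < t) : (0:ℂ) < (t:ℂ) := by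
  rw [Complex.lt_def]; simp [ht]

lemma smul_psd {Q : Matrix (Fin n) (Fin n) ℂ} (hQ : Q.PosSemidef) {t : ℝ} (ht : 0 ≤ t) :
    ((t:ℂ) • Q).PosSemidef := by
  refine Matrix.PosSemidef.of_dotProduct_mulVec_nonneg ?_ ?_
  · show _ᴴ = _
    rw [Matrix.conjTranspose_smul, Complex.star_def, Complex.conj_ofReal, hQ.1.eq]
  · intro x
    rw [Matrix.smul_mulVec, dotProduct_smul, smul_eq_mul]
    exact mul_nonneg (coe_nonneg ht) (hQ.dotProduct_mulVec_nonneg x)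

lemma mulVec_sum_smul {d : ℕ} (P : Fin d → Matrix (Fin n) (Fin n) ℂ) (c : Fin d → ℂ)
    (x : Fin n → ℂ) : (∑ i, c i • P i) *ᵥ x = ∑ i, c i • (P i *ᵥ x) := by
  rw [show (∑ i, c i • P i) *ᵥ x = ∑ i, (c i • P i) *ᵥ x from
    map_sum (Matrix.mulVec.addMonoidHomLeft x) _ _]
  simp [Matrix.smul_mulVec]

lemma posdef_sum_convex {d : ℕ} (P : Fin d → Matrix (Fin n) (Fin n) ℂ)
    (hP : ∀ i, (P i).PosDef) (θ : Fin d → ℝ) (hθ : ∀ i, 0 ≤ θ i) (hθsum : ∑ i, θ i = 1) :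
    (∑ i, ((θ i : ℝ) : ℂ) • P i).PosDef := by
  obtain ⟨j, hj⟩ : ∃ j, 0 < θ j := by
    by_contra hcon
    push_neg at hcon
    have : ∑ i, θ i ≤ 0 := Finset.sum_nonpos fun i _ => hcon i
    linarith [hθsum ▸ this]
  refine Matrix.PosDef.of_dotProduct_mulVec_pos ?_ ?_
  · show _ᴴ = _
    rw [Matrix.conjTranspose_sum]
    refine Finset.sum_congr rfl fun i _ => ?_
    rw [Matrix.conjTranspose_smul, Complex.star_def, Complex.conj_ofReal, (hP i).1.eq]
  · intro x hx
    rw [mulVec_sum_smul, dot_sum]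
    refine Finset.sum_pos' (fun i _ => ?_) ⟨j, Finset.mem_univ j, ?_⟩
    · rw [dotProduct_smul, smul_eq_mul]
      exact mul_nonneg (coe_nonneg (hθ i)) ((hP i).posSemidef.dotProduct_mulVec_nonneg x)
    · rw [dotProduct_smul, smul_eq_mul]
      exact mul_pos (coe_pos hj) ((hP j).dotProduct_mulVec_pos hx)

lemma posdef_smul_one {σ : ℝ} (hσ : 0 < σ) :
    ((σ:ℂ) • (1 : Matrix (Fin n) (Fin n) ℂ)).PosDef := by
  refine Matrix.PosDef.of_dotProduct_mulVec_pos ?_ ?_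
  · show _ᴴ = _
    rw [Matrix.conjTranspose_smul, Complex.star_def, Complex.conj_ofReal, Matrix.conjTranspose_one]
  · intro x hx
    rw [Matrix.smul_mulVec, Matrix.one_mulVec, dotProduct_smul, smul_eq_mul]
    refine mul_pos (coe_pos hσ) ?_
    have h := Matrix.PosDef.one (n := Fin n) (R := ℂ)
    simpa using h.dotProduct_mulVec_pos hx

end TSJ

namespace TSJ
variable {n : ℕ}

lemma main_ineq {d : ℕ} (P : Fin d → Matrix (Fin n) (Fin n) ℂ) (hP : ∀ i, (P i).PosDef)
    (Q : Matrix (Fin n) (Fin n) ℂ) (hQ : Q.PosSemidef)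
    (θ : Fin d → ℝ) (hθ : ∀ i, 0 ≤ θ i) (hθsum : ∑ i, θ i = 1) :
    Real.log (((∑ i, ((θ i : ℝ) : ℂ) • P i) + Q).det.re)
        - Real.log ((∑ i, ((θ i : ℝ) : ℂ) • P i).det.re)
      ≤ ∑ i, θ i * (Real.log ((P i + Q).det.re) - Real.log ((P i).det.re)) := by
  set c : Fin d → ℂ := fun i => ((θ i : ℝ) : ℂ) with hc
  set B : Matrix (Fin n) (Fin n) ℂ := ∑ i, c i • P i with hBd
  have hcsum : ∑ i, c i = 1 := by
    rw [hc]; push_cast; rw [← Complex.ofReal_sum]; rw [hθsum]; norm_num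
  have hcnn : ∀ i, (0:ℂ) ≤ c i := fun i => coe_nonneg (hθ i)
  have hB : B.PosDef := posdef_sum_convex P hP θ hθ hθsum
  -- positive definiteness along the path
  have hPt : ∀ t : ℝ, t ∈ Set.Icc (0:ℝ) 1 → ∀ i, (P i + (t:ℂ) • Q).PosDef := fun t ht i =>
    (hP i).add_posSemidef (smul_psd hQ ht.1)
  have hBt : ∀ t : ℝ, t ∈ Set.Icc (0:ℝ) 1 → (B + (t:ℂ) • Q).PosDef := fun t ht =>
    hB.add_posSemidef (smul_psd hQ ht.1)
  -- the path function and its derivative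
  set H : ℝ → ℝ := fun t => (∑ i, θ i * Real.log ((P i + (t:ℂ) • Q).det.re))
      - Real.log ((B + (t:ℂ) • Q).det.re) with hH
  set D : ℝ → ℝ := fun t => (∑ i, θ i * (((P i + (t:ℂ) • Q)⁻¹ * Q).trace).re)
      - (((B + (t:ℂ) • Q)⁻¹ * Q).trace).re with hD
  have hDeriv : ∀ t ∈ Set.Icc (0:ℝ) 1, HasDerivAt H (D t) t := by
    intro t ht
    refine HasDerivAt.sub ?_ (hasDerivAt_log_det B Q t (hBt t ht))
    exact HasDerivAt.fun_sum fun i _ => (hasDerivAt_log_det (P i) Q t (hPt t ht i)).const_mul (θ i)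
  have hDnn : ∀ t ∈ Set.Icc (0:ℝ) 1, 0 ≤ D t := by
    intro t ht
    have hsum : ∑ i, c i • (P i + (t:ℂ) • Q) = B + (t:ℂ) • Q := by
      simp only [smul_add, Finset.sum_add_distrib, hBd]
      congr 1
      rw [← Finset.sum_smul, hcsum, one_smul]
    have htr := trace_inv_convex (fun i => P i + (t:ℂ) • Q) (hPt t ht) c hcnn hcsum
      (hsum ▸ hBt t ht) hQ
    rw [hsum] at htr
    have hre := (Complex.le_def.mp htr).1
    rw [Complex.re_sum] at hre
    · rw [hD]
      refine sub_nonneg.mpr ?_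
      refine le_trans hre (le_of_eq ?_)
      refine Finset.sum_congr rfl fun i _ => ?_
      rw [hc]
      simp [Complex.mul_re]
  -- monotonicity
  have hmono : MonotoneOn H (Set.Icc (0:ℝ) 1) := by
    refine monotoneOn_of_deriv_nonneg (convex_Icc 0 1)
      (fun t ht => (hDeriv t ht).continuousAt.continuousWithinAt)
      (fun t ht => ((hDeriv t (interior_subset ht)).differentiableAt).differentiableWithinAt)
      (fun t ht => ?_)
    rw [(hDeriv t (interior_subset ht)).deriv]
    exact hDnn t (interior_subset ht)
  have h01 : H 0 ≤ H 1 := hmono (Set.left_mem_Icc.mpr zero_le_one)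
    (Set.right_mem_Icc.mpr zero_le_one) zero_le_one
  rw [hH] at h01
  simp only [Complex.ofReal_zero, Complex.ofReal_one, zero_smul, one_smul, add_zero] at h01
  calc Real.log ((B + Q).det.re) - Real.log (B.det.re)
        ≤ ∑ i, (θ i * Real.log ((P i + Q).det.re) - θ i * Real.log ((P i).det.re)) := by
          rw [Finset.sum_sub_distrib]
          linarith [h01]
      _ = ∑ i, θ i * (Real.log ((P i + Q).det.re) - Real.log ((P i).det.re)) := by
          refine Finset.sum_congr rfl fun i _ => by ring

end TSJ

namespace TSJ
variable {n : ℕ}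

lemma det_eq_re {M : Matrix (Fin n) (Fin n) ℂ} (hM : M.PosDef) : M.det = ((M.det.re : ℝ) : ℂ) := by
  apply Complex.ext <;> simp [det_im_zero hM]

lemma rate_eq {P Q : Matrix (Fin n) (Fin n) ℂ} (hP : P.PosDef) (hQ : Q.PosSemidef) :
    Real.logb 2 ((1 + P⁻¹ * Q).det.re)
      = (Real.log ((P + Q).det.re) - Real.log (P.det.re)) / Real.log 2 := by
  have hU : IsUnit P.det := isUnit_iff_isUnit_det _ |>.mp hP.isUnit
  have h1 : 1 + P⁻¹ * Q = P⁻¹ * (P + Q) := by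
    rw [Matrix.mul_add, Matrix.nonsing_inv_mul _ hU]
  have hPQ : (P + Q).PosDef := hP.add_posSemidef hQ
  have h2 : (1 + P⁻¹ * Q).det = ((P.det.re⁻¹ * (P + Q).det.re : ℝ) : ℂ) := by
    rw [h1, Matrix.det_mul, Matrix.det_nonsing_inv, Ring.inverse_eq_inv]
    conv_lhs => rw [det_eq_re hP, det_eq_re hPQ]
    push_cast
    ring
  rw [h2]
  rw [Complex.ofReal_re, Real.logb]
  rw [inv_mul_eq_div, Real.log_div (det_re_pos hPQ).ne' (det_re_pos hP).ne']

end TSJ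


/-- Jensen-type inequality for the WIT rate as a function of the energy covariance:
for positive semidefinite `S_{E,1}, …, S_{E,d}` and convex weights `θ_i`,
`∑ i, θ_i R(S_{E,i}, S_I) ≥ R(∑ i, θ_i S_{E,i}, S_I)`. -/
theorem rate_time_sharing_jensen
    (NI MEdim MI d : ℕ) (σsq : ℝ) (hσ : 0 < σsq)
    (F : Matrix (Fin NI) (Fin MEdim) ℂ) (H : Matrix (Fin NI) (Fin MI) ℂ)
    (SI : Matrix (Fin MI) (Fin MI) ℂ) (hSI : SI.PosSemidef)
    (SE : Fin d → Matrix (Fin MEdim) (Fin MEdim) ℂ)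
    (hSE : ∀ i, (SE i).PosSemidef)
    (θ : Fin d → ℝ) (hθ : ∀ i, 0 ≤ θ i) (hθsum : ∑ i, θ i = 1) :
    ∑ i, θ i * rateR σsq F H (SE i) SI
      ≥ rateR σsq F H (∑ i, θ i • SE i) SI := by
  classical
  set Q : Matrix (Fin NI) (Fin NI) ℂ := H * SI * Hᴴ with hQd
  have hQ : Q.PosSemidef := hSI.mul_mul_conjTranspose_same H
  set P : Fin d → Matrix (Fin NI) (Fin NI) ℂ :=
    fun i => F * SE i * Fᴴ + (σsq : ℂ) • 1 with hPd
  have hP : ∀ i, (P i).PosDef := fun i =>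
    Matrix.PosDef.posSemidef_add ((hSE i).mul_mul_conjTranspose_same F) (TSJ.posdef_smul_one hσ)
  have hbar : F * (∑ i, θ i • SE i) * Fᴴ + (σsq : ℂ) • 1 = ∑ i, ((θ i : ℝ) : ℂ) • P i := by
    have hreal : ∀ i, θ i • SE i = ((θ i : ℝ) : ℂ) • SE i := fun i => by
      ext a b; simp [Complex.real_smul]
    calc F * (∑ i, θ i • SE i) * Fᴴ + (σsq : ℂ) • 1
        = (∑ i, ((θ i : ℝ) : ℂ) • (F * SE i * Fᴴ)) + (σsq : ℂ) • 1 := by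
          congr 1
          rw [Matrix.mul_sum, Matrix.sum_mul]
          refine Finset.sum_congr rfl fun i _ => ?_
          rw [hreal i, Matrix.mul_smul, Matrix.smul_mul]
      _ = ∑ i, ((θ i : ℝ) : ℂ) • P i := by
          rw [hPd]
          simp only [smul_add, Finset.sum_add_distrib]
          congr 1
          rw [← Finset.sum_smul]
          have : ∑ i, ((θ i : ℝ) : ℂ) = 1 := by
            rw [← Complex.ofReal_sum, hθsum]; norm_num
          rw [this, one_smul]
  have hBpd : (∑ i, ((θ i : ℝ) : ℂ) • P i).PosDef := TSJ.posdef_sum_convex P hP θ hθ hθsum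
  have hrate : ∀ i, rateR σsq F H (SE i) SI
      = (Real.log ((P i + Q).det.re) - Real.log ((P i).det.re)) / Real.log 2 := fun i => by
    rw [rateR]; exact TSJ.rate_eq (hP i) hQ
  have hrateBar : rateR σsq F H (∑ i, θ i • SE i) SI
      = (Real.log (((∑ i, ((θ i : ℝ) : ℂ) • P i) + Q).det.re)
          - Real.log ((∑ i, ((θ i : ℝ) : ℂ) • P i).det.re)) / Real.log 2 := by
    rw [rateR]
    have hpd : (F * (∑ i, θ i • SE i) * Fᴴ + (σsq : ℂ) • 1).PosDef := hbar ▸ hBpd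
    rw [TSJ.rate_eq hpd hQ, hbar]
  have hmain := TSJ.main_ineq P hP Q hQ θ hθ hθsum
  rw [ge_iff_le, hrateBar]
  have hL : (0:ℝ) < Real.log 2 := Real.log_pos one_lt_two
  calc (Real.log (((∑ i, ((θ i : ℝ) : ℂ) • P i) + Q).det.re)
          - Real.log ((∑ i, ((θ i : ℝ) : ℂ) • P i).det.re)) / Real.log 2
      ≤ (∑ i, θ i * (Real.log ((P i + Q).det.re) - Real.log ((P i).det.re))) / Real.log 2 := by
        gcongr
    _ = ∑ i, θ i * rateR σsq F H (SE i) SI := by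
        rw [Finset.sum_div]
        refine Finset.sum_congr rfl fun i _ => ?_
        rw [hrate i, mul_div_assoc]
end
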